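/- Let X be a Banach space and, for each n ∈ ℕ, let X_n be a Banach space. Let T : X → X and T_n : X_n → X_n be compact linear operators, and let E_n : X → X_n, M_n : X_n → X be bounded linear operators with M_n ∘ E_n = id_X, ‖E_n‖ ≤ 2 and ‖M_n‖ ≤ 2 for all n. Assume ‖T_n − E_n ∘ T ∘ M_n‖_{L(X_n, X_n)} → 0 as n → ∞. If for each n the scalar μ_n is an eigenvalue of T_n (i.e. there exists u_n ≠ 0 with T_n u_n = μ_n u_n), and μ_n → μ with μ ≠ 0, then μ is an eigenvalue of T. -/

import Mathlib

open Filter Topology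

/-- Upper semicontinuity of the spectrum (Lemma 3.2 / Remark 3.3, compact
inverse form): if `T_n`, `T` are compact operators, `M_n ∘ E_n = id`,
`‖E_n‖, ‖M_n‖ ≤ 2`, and `‖T_n - E_n T M_n‖ → 0`, then any nonzero limit `μ` of
eigenvalues `μ_n` of `T_n` is an eigenvalue of `T`. -/
theorem eigenvalue_upper_semicontinuity
    {X : Type*} [NormedAddCommGroup X] [NormedSpace ℝ X] [CompleteSpace X]
    {Xn : ℕ → Type*} [∀ n, NormedAddCommGroup (Xn n)] [∀ n, NormedSpace ℝ (Xn n)]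
    [∀ n, CompleteSpace (Xn n)]
    (T : X →L[ℝ] X) (Tn : ∀ n, Xn n →L[ℝ] Xn n)
    (En : ∀ n, X →L[ℝ] Xn n) (Mn : ∀ n, Xn n →L[ℝ] X)
    (hT : IsCompactOperator T) (hTn : ∀ n, IsCompactOperator (Tn n))
    (hME : ∀ n, (Mn n).comp (En n) = ContinuousLinearMap.id ℝ X)
    (hE : ∀ n, ‖En n‖ ≤ 2) (hM : ∀ n, ‖Mn n‖ ≤ 2)
    (hconv : Tendsto (fun n => ‖Tn n - (En n).comp (T.comp (Mn n))‖) atTop (𝓝 0))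
    (μn : ℕ → ℝ) (μ : ℝ)
    (heig : ∀ n, ∃ u : Xn n, u ≠ 0 ∧ Tn n u = μn n • u)
    (hμn : Tendsto μn atTop (𝓝 μ)) (hμ : μ ≠ 0) :
    ∃ u : X, u ≠ 0 ∧ T u = μ • u := by
  classical
  choose u hu0 hueig using heig
  -- normalized eigenvectors
  set w : ∀ n, Xn n := fun n => ‖u n‖⁻¹ • u n with hw
  have hwnorm : ∀ n, ‖w n‖ = 1 := by
    intro n
    simp [hw, norm_smul, abs_of_nonneg, inv_mul_cancel₀ (norm_ne_zero_iff.mpr (hu0 n))]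
  have hweig : ∀ n, Tn n (w n) = μn n • w n := by
    intro n
    rw [hw]
    simp only [map_smul, hueig n]
    rw [smul_comm]
  set ε : ℕ → ℝ := fun n => ‖Tn n - (En n).comp (T.comp (Mn n))‖ with hε
  set v : ℕ → X := fun n => Mn n (w n) with hv
  have hvball : ∀ n, v n ∈ Metric.closedBall (0 : X) 2 := by
    intro n
    simp only [Metric.mem_closedBall, dist_zero_right]
    calc ‖Mn n (w n)‖ ≤ ‖Mn n‖ * ‖w n‖ := (Mn n).le_opNorm _
    _ ≤ 2 * 1 := by
        exact mul_le_mul (hM n) (le_of_eq (hwnorm n)) (norm_nonneg _) (by norm_num)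
    _ = 2 := by norm_num
  -- key estimate (a)
  have key : ∀ n, ‖T (v n) - μn n • v n‖ ≤ 2 * ε n := by
    intro n
    have h1 : T (v n) - μn n • v n
        = Mn n (((En n).comp (T.comp (Mn n)) - Tn n) (w n)) := by
      have h2 : Mn n (En n (T (v n))) = T (v n) :=
        DFunLike.congr_fun (hME n) (T (v n))
      simp only [ContinuousLinearMap.sub_apply, ContinuousLinearMap.comp_apply, map_sub]
      rw [h2, hweig n, map_smul]
    rw [h1]
    calc ‖Mn n (((En n).comp (T.comp (Mn n)) - Tn n) (w n))‖
        ≤ ‖Mn n‖ * ‖((En n).comp (T.comp (Mn n)) - Tn n) (w n)‖ := (Mn n).le_opNorm _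
      _ ≤ 2 * (‖(En n).comp (T.comp (Mn n)) - Tn n‖ * ‖w n‖) :=
          mul_le_mul (hM n) (ContinuousLinearMap.le_opNorm _ _) (norm_nonneg _) (by norm_num)
      _ = 2 * ε n := by rw [hwnorm n, norm_sub_rev]; ring
  -- key estimate (b): lower bound on ‖T (v n)‖
  have lower : ∀ n, (|μn n| - ε n) / 2 ≤ ‖T (v n)‖ := by
    intro n
    have h1 : μn n • w n - En n (T (v n)) = (Tn n - (En n).comp (T.comp (Mn n))) (w n) := by
      simp [hweig n]
      rfl
    have h2 : |μn n| ≤ ε n + 2 * ‖T (v n)‖ := by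
      calc |μn n| = ‖μn n • w n‖ := by simp [norm_smul, hwnorm n]
        _ = ‖(μn n • w n - En n (T (v n))) + En n (T (v n))‖ := by rw [sub_add_cancel]
        _ ≤ ‖μn n • w n - En n (T (v n))‖ + ‖En n (T (v n))‖ := norm_add_le _ _
        _ ≤ ε n + 2 * ‖T (v n)‖ := by
            refine add_le_add ?_ ?_
            · rw [h1]
              calc ‖(Tn n - (En n).comp (T.comp (Mn n))) (w n)‖
                  ≤ ε n * ‖w n‖ := ContinuousLinearMap.le_opNorm _ _
                _ = ε n := by rw [hwnorm n, mul_one]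
            · calc ‖En n (T (v n))‖ ≤ ‖En n‖ * ‖T (v n)‖ := (En n).le_opNorm _
                _ ≤ 2 * ‖T (v n)‖ :=
                  mul_le_mul_of_nonneg_right (hE n) (norm_nonneg _)
    linarith
  -- compactness: extract convergent subsequence of T (v n)
  have hcpt : IsCompact (closure (T '' Metric.closedBall (0 : X) 2)) :=
    hT.isCompact_closure_image_closedBall (𝕜₁ := ℝ) 2
  have hmem : ∀ n, T (v n) ∈ closure (T '' Metric.closedBall (0 : X) 2) :=
    fun n => subset_closure ⟨v n, hvball n, rfl⟩
  obtain ⟨z, -, φ, hφ, hz⟩ := hcpt.tendsto_subseq hmem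
  have hεφ : Tendsto (fun k => ε (φ k)) atTop (𝓝 0) := hconv.comp hφ.tendsto_atTop
  have hμφ : Tendsto (fun k => μn (φ k)) atTop (𝓝 μ) := hμn.comp hφ.tendsto_atTop
  -- z ≠ 0
  have hznorm : |μ| / 2 ≤ ‖z‖ := by
    have h1 : Tendsto (fun k => (|μn (φ k)| - ε (φ k)) / 2) atTop (𝓝 (|μ| / 2)) := by
      have := (hμφ.abs.sub hεφ).div_const 2
      simpa using this
    have h2 : Tendsto (fun k => ‖T (v (φ k))‖) atTop (𝓝 ‖z‖) :=
      hz.norm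
    exact le_of_tendsto_of_tendsto' h1 h2 fun k => lower (φ k)
  have hz0 : z ≠ 0 := by
    intro h
    rw [h, norm_zero] at hznorm
    have : |μ| > 0 := abs_pos.mpr hμ
    linarith
  -- v (φ k) → μ⁻¹ • z
  have hr : Tendsto (fun k => T (v (φ k)) - μn (φ k) • v (φ k)) atTop (𝓝 0) := by
    have h2 : Tendsto (fun k => (2 : ℝ) * ε (φ k)) atTop (𝓝 0) := by
      simpa using hεφ.const_mul 2
    exact squeeze_zero_norm (fun k => key (φ k)) h2
  have hvconv : Tendsto (fun k => v (φ k)) atTop (𝓝 (μ⁻¹ • z)) := by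
    have h1 : Tendsto (fun k => (μn (φ k))⁻¹ • (T (v (φ k)) - (T (v (φ k)) - μn (φ k) • v (φ k))))
        atTop (𝓝 (μ⁻¹ • (z - 0))) := by
      exact ((hμφ.inv₀ hμ)).smul (hz.sub hr)
    rw [sub_zero] at h1
    have heq : ∀ᶠ k in atTop, (μn (φ k))⁻¹ • (T (v (φ k)) - (T (v (φ k)) - μn (φ k) • v (φ k)))
        = v (φ k) := by
      have hne : ∀ᶠ k in atTop, μn (φ k) ≠ 0 := by
        have : ∀ᶠ k in atTop, μn (φ k) ∈ {x : ℝ | x ≠ 0} :=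
          hμφ (isOpen_compl_singleton.mem_nhds hμ)
        exact this
      filter_upwards [hne] with k hk
      simp [smul_smul, inv_mul_cancel₀ hk]
    exact Tendsto.congr' heq h1
  -- conclude
  refine ⟨μ⁻¹ • z, by simp [hz0, hμ], ?_⟩
  have hTv : Tendsto (fun k => T (v (φ k))) atTop (𝓝 (T (μ⁻¹ • z))) :=
    (T.continuous.tendsto _).comp hvconv
  have := tendsto_nhds_unique hTv hz
  rw [this]
  rw [smul_smul, mul_inv_cancel₀ hμ, one_smul]
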